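/- Let P = {1,…,N} and A_i ∈ ℝ^{d×d} for i ∈ P. Suppose there exist symmetric positive definite matrices P_i, a constant λ_0 > 0 with ⟨P_i e^{A_i t} ξ, e^{A_i t} ξ⟩ ≤ e^{−2λ_0 t} ⟨P_i ξ, ξ⟩ for all i ∈ P, ξ ∈ ℝ^d, t ≥ 0, and a constant μ ≥ 1 with ⟨P_j z, z⟩ ≤ μ ⟨P_i z, z⟩ for all z ∈ ℝ^d and all i, j ∈ P. Fix N_0 > 0 and τ_a > ln μ / (2λ_0). Then there exists a class-KL function β (depending only on N_0, τ_a, μ, λ_0 and the matrices P_i) such that for every switching signal σ with average dwell time τ_a and chatter bound N_0 (i.e., the number N_σ(T,t) of switches on every interval (t, T] satisfies N_σ(T,t) ≤ N_0 + (T − t)/τ_a for all T ≥ t ≥ 0), every solution of ẋ(t) = A_{σ(t)} x(t) satisfies ‖x(t)‖ ≤ β(‖x(0)‖, t) for all t ≥ 0; in particular the switched system is globally uniformly asymptotically stable over this class of switching signals. -/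

import Mathlib

open Filter
open scoped RealInnerProductSpace

/-- The quadratic Lyapunov-like function `ξ ↦ ⟨Pξ, ξ⟩` associated with a matrix `P`. -/
noncomputable def quadForm {d : ℕ} (P : Matrix (Fin d) (Fin d) ℝ)
    (ξ : EuclideanSpace ℝ (Fin d)) : ℝ :=
  ⟪Matrix.toEuclideanLin P ξ, ξ⟫

/-- `x` is a solution on `[0,∞)` of the switched linear system generated by the
family `A` and the switching signal with switching instants `τ` and index sequence `s`. -/
def IsSwitchedSolution {d N : ℕ} (A : Fin N → Matrix (Fin d) (Fin d) ℝ)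
    (τ : ℕ → ℝ) (s : ℕ → Fin N) (x : ℝ → EuclideanSpace ℝ (Fin d)) : Prop :=
  ContinuousOn x (Set.Ici 0) ∧
  ∀ n : ℕ, ∀ t ∈ Set.Ico (τ n) (τ (n + 1)),
    HasDerivWithinAt x (Matrix.toEuclideanLin (A (s n)) (x t)) (Set.Ico (τ n) (τ (n + 1))) t

/-- `β` is a class-KL function on `[0,∞) × [0,∞)`: for each fixed `t ≥ 0`, `β(·,t)` is
continuous, strictly increasing and zero at zero; for each fixed `r ≥ 0`, `β(r,·)` is
decreasing and tends to `0` at infinity. -/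
def IsClassKL (β : ℝ → ℝ → ℝ) : Prop :=
  (∀ t : ℝ, 0 ≤ t → β 0 t = 0 ∧ StrictMonoOn (fun r => β r t) (Set.Ici 0) ∧
    ContinuousOn (fun r => β r t) (Set.Ici 0)) ∧
  (∀ r : ℝ, 0 ≤ r → AntitoneOn (β r) (Set.Ici 0) ∧ Tendsto (β r) atTop (nhds 0))

/-! ### Auxiliary lemmas -/

set_option synthInstance.maxHeartbeats 1000000
set_option maxHeartbeats 1000000

open NormedSpace

section Aux

lemma isClassKL_aux (C lam : ℝ) (hC : 0 < C) (hlam : 0 < lam) :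
    IsClassKL (fun r t => C * Real.exp (-(lam * t)) * r) := by
  constructor
  · intro t _
    refine ⟨mul_zero _, ?_, ?_⟩
    · intro r1 _ r2 _ h12
      exact mul_lt_mul_of_pos_left h12 (by positivity)
    · exact (continuous_mul_left _).continuousOn
  · intro r hr
    constructor
    · intro t1 _ t2 _ h12
      have h : Real.exp (-(lam * t2)) ≤ Real.exp (-(lam * t1)) :=
        Real.exp_le_exp.2 (by nlinarith)
      exact mul_le_mul_of_nonneg_right (mul_le_mul_of_nonneg_left h hC.le) hr
    · have h1 : Tendsto (fun t : ℝ => lam * t) atTop atTop :=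
        tendsto_id.const_mul_atTop hlam
      have h2 : Tendsto (fun t : ℝ => Real.exp (-(lam * t))) atTop (nhds 0) :=
        Real.tendsto_exp_neg_atTop_nhds_zero.comp h1
      have h3 := (h2.const_mul C).mul_const r
      simpa using h3

lemma myCLM_cont {d : ℕ} : Continuous
    (fun M : Matrix (Fin d) (Fin d) ℝ => Matrix.toEuclideanCLM (𝕜 := ℝ) M) := by
  have : (fun M : Matrix (Fin d) (Fin d) ℝ => Matrix.toEuclideanCLM (𝕜 := ℝ) M) =
      ⇑({ toFun := fun M => Matrix.toEuclideanCLM (𝕜 := ℝ) M,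
          map_add' := fun a b => map_add _ a b,
          map_smul' := fun c a => map_smul _ c a } :
        Matrix (Fin d) (Fin d) ℝ →ₗ[ℝ]
          (EuclideanSpace ℝ (Fin d) →L[ℝ] EuclideanSpace ℝ (Fin d))) := rfl
  rw [this]
  exact LinearMap.continuous_of_finiteDimensional _

lemma myCLM_exp {d : ℕ} (M : Matrix (Fin d) (Fin d) ℝ) :
    Matrix.toEuclideanCLM (𝕜 := ℝ) (exp M) = exp (Matrix.toEuclideanCLM (𝕜 := ℝ) M) := by
  letI : SeminormedRing (Matrix (Fin d) (Fin d) ℝ) := Matrix.linftyOpSemiNormedRing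
  letI : NormedRing (Matrix (Fin d) (Fin d) ℝ) := Matrix.linftyOpNormedRing
  letI : NormedAlgebra ℝ (Matrix (Fin d) (Fin d) ℝ) := Matrix.linftyOpNormedAlgebra
  letI : NormedAlgebra ℚ (Matrix (Fin d) (Fin d) ℝ) := NormedAlgebra.restrictScalars ℚ ℝ _
  exact map_exp (Matrix.toEuclideanCLM (𝕜 := ℝ)) myCLM_cont M

lemma flow_hasDerivAt {d : ℕ} (L : EuclideanSpace ℝ (Fin d) →L[ℝ] EuclideanSpace ℝ (Fin d))
    (c : EuclideanSpace ℝ (Fin d)) (t0 t : ℝ) :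
    HasDerivAt (fun u : ℝ => exp ((u - t0) • L) c) (L (exp ((t - t0) • L) c)) t := by
  have h1 : HasDerivAt (fun v : ℝ => exp (v • L)) (L * exp ((t - t0) • L)) (t - t0) :=
    hasDerivAt_exp_smul_const' L (t - t0)
  have h2 : HasDerivAt (fun u : ℝ => u - t0) 1 t := (hasDerivAt_id t).sub_const t0
  have h3 : HasDerivAt (fun u : ℝ => exp ((u - t0) • L)) (L * exp ((t - t0) • L)) t := by
    simpa [Function.comp_def] using h1.scomp t h2
  have h4 := h3.clm_apply (hasDerivAt_const t c)
  simpa using h4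

open Set in
lemma flow_eq {d : ℕ} (M : Matrix (Fin d) (Fin d) ℝ) {x : ℝ → EuclideanSpace ℝ (Fin d)}
    {a b : ℝ}
    (hx : ContinuousOn x (Icc a b))
    (hx' : ∀ t ∈ Ico a b, HasDerivWithinAt x (Matrix.toEuclideanLin M (x t)) (Ici t) t) :
    ∀ t ∈ Icc a b, x t = Matrix.toEuclideanLin (exp ((t - a) • M)) (x a) := by
  set L := Matrix.toEuclideanCLM (𝕜 := ℝ) M with hL
  have hbridge : ∀ (u : ℝ) (ξ : EuclideanSpace ℝ (Fin d)),
      Matrix.toEuclideanLin (exp (u • M)) ξ = exp (u • L) ξ := by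
    intro u ξ
    have h := congrArg (fun T : EuclideanSpace ℝ (Fin d) →L[ℝ] EuclideanSpace ℝ (Fin d) => T ξ)
      (myCLM_exp (u • M))
    rw [map_smul] at h
    exact h
  set g : ℝ → EuclideanSpace ℝ (Fin d) := fun u => exp ((u - a) • L) (x a) with hg
  have hkey : EqOn x g (Icc a b) := by
    apply ODE_solution_unique_of_mem_Icc_right (v := fun _ z => L z)
      (s := fun _ => (univ : Set (EuclideanSpace ℝ (Fin d)))) (K := ‖L‖₊)
      (fun _ _ => L.lipschitz.lipschitzOnWith) hx hx' (fun _ _ => trivial)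
      (fun t _ => (flow_hasDerivAt L (x a) a t).continuousAt.continuousWithinAt)
      (fun t _ => (flow_hasDerivAt L (x a) a t).hasDerivWithinAt)
      (fun _ _ => trivial) ?_
    have h0 : (a - a) • L = 0 := by rw [sub_self]; exact zero_smul ℝ L
    rw [h0, exp_zero, ContinuousLinearMap.one_apply]
  intro t ht
  rw [hkey ht, hbridge]

lemma quadForm_smul {d : ℕ} (P : Matrix (Fin d) (Fin d) ℝ) (c : ℝ)
    (z : EuclideanSpace ℝ (Fin d)) : quadForm P (c • z) = c ^ 2 * quadForm P z := by
  unfold quadForm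
  rw [map_smul, real_inner_smul_left, real_inner_smul_right]
  ring

lemma quadForm_zero {d : ℕ} (P : Matrix (Fin d) (Fin d) ℝ) : quadForm P 0 = 0 := by
  unfold quadForm; rw [map_zero, inner_zero_left]

lemma quadForm_continuous {d : ℕ} (P : Matrix (Fin d) (Fin d) ℝ) :
    Continuous (quadForm P) := by
  have : quadForm P = fun z => ⟪Matrix.toEuclideanCLM (𝕜 := ℝ) P z, z⟫ := rfl
  rw [this]
  exact Continuous.inner (Matrix.toEuclideanCLM (𝕜 := ℝ) P).continuous continuous_id

lemma quadForm_pos {d : ℕ} {P : Matrix (Fin d) (Fin d) ℝ} (hP : P.PosDef)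
    {z : EuclideanSpace ℝ (Fin d)} (hz : z ≠ 0) : 0 < quadForm P z := by
  have hz' : (WithLp.ofLp z) ≠ 0 := fun h => hz (by simpa using congrArg (WithLp.toLp 2) h)
  have h := hP.dotProduct_mulVec_pos hz'
  unfold quadForm
  rw [Matrix.toEuclideanLin_apply]
  rw [PiLp.inner_apply]
  simpa [dotProduct, mul_comm] using h

lemma quadForm_le {d : ℕ} (P : Matrix (Fin d) (Fin d) ℝ) (z : EuclideanSpace ℝ (Fin d)) :
    quadForm P z ≤ ‖Matrix.toEuclideanCLM (𝕜 := ℝ) P‖ * ‖z‖ ^ 2 := by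
  have h1 : quadForm P z ≤ ‖Matrix.toEuclideanCLM (𝕜 := ℝ) P z‖ * ‖z‖ :=
    real_inner_le_norm _ _
  have h2 : ‖Matrix.toEuclideanCLM (𝕜 := ℝ) P z‖ ≤ ‖Matrix.toEuclideanCLM (𝕜 := ℝ) P‖ * ‖z‖ :=
    (Matrix.toEuclideanCLM (𝕜 := ℝ) P).le_opNorm z
  nlinarith [norm_nonneg z, norm_nonneg (Matrix.toEuclideanCLM (𝕜 := ℝ) P z)]

lemma quadForm_lower {d : ℕ} {P : Matrix (Fin d) (Fin d) ℝ} (hP : P.PosDef) :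
    ∃ a : ℝ, 0 < a ∧ ∀ z : EuclideanSpace ℝ (Fin d), a * ‖z‖ ^ 2 ≤ quadForm P z := by
  rcases Nat.eq_zero_or_pos d with hd | hd
  · refine ⟨1, one_pos, fun z => ?_⟩
    subst hd
    have hz : z = 0 := Subsingleton.elim z 0
    simp [hz, quadForm_zero]
  · have i0 : Fin d := ⟨0, hd⟩
    have hne : (Metric.sphere (0 : EuclideanSpace ℝ (Fin d)) 1).Nonempty := by
      refine ⟨EuclideanSpace.single i0 1, ?_⟩
      simp [EuclideanSpace.norm_single]
    obtain ⟨z0, hz0m, hz0min⟩ := (isCompact_sphere (0 : EuclideanSpace ℝ (Fin d)) 1).exists_isMinOn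
      hne (quadForm_continuous P).continuousOn
    have hz0norm : ‖z0‖ = 1 := by simpa using hz0m
    have hz0ne : z0 ≠ 0 := by intro h; rw [h] at hz0norm; simp at hz0norm
    refine ⟨quadForm P z0, quadForm_pos hP hz0ne, fun z => ?_⟩
    rcases eq_or_ne z 0 with rfl | hz
    · simp [quadForm_zero]
    · have hn : ‖z‖ ≠ 0 := norm_ne_zero_iff.mpr hz
      have hmem : ‖z‖⁻¹ • z ∈ Metric.sphere (0 : EuclideanSpace ℝ (Fin d)) 1 := by
        simp [norm_smul, abs_of_nonneg (inv_nonneg.mpr (norm_nonneg z)), inv_mul_cancel₀ hn]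
      have hmin : quadForm P z0 ≤ quadForm P (‖z‖⁻¹ • z) := hz0min hmem
      have hsc : quadForm P (‖z‖⁻¹ • z) = (‖z‖⁻¹) ^ 2 * quadForm P z := quadForm_smul P _ z
      rw [hsc] at hmin
      have h2 : 0 < ‖z‖ := lt_of_le_of_ne (norm_nonneg z) (Ne.symm hn)
      calc quadForm P z0 * ‖z‖ ^ 2 ≤ (‖z‖⁻¹ ^ 2 * quadForm P z) * ‖z‖ ^ 2 := by nlinarith
        _ = quadForm P z := by field_simp

lemma quadForm_bounds {d N : ℕ} (P : Fin N → Matrix (Fin d) (Fin d) ℝ)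
    (hP : ∀ i, (P i).PosDef) :
    ∃ a b : ℝ, 0 < a ∧ 0 < b ∧ ∀ (i : Fin N) (z : EuclideanSpace ℝ (Fin d)),
      a * ‖z‖ ^ 2 ≤ quadForm (P i) z ∧ quadForm (P i) z ≤ b * ‖z‖ ^ 2 := by
  rcases isEmpty_or_nonempty (Fin N) with hN | hN
  · exact ⟨1, 1, one_pos, one_pos, fun i => (hN.false i).elim⟩
  · choose aa haa using fun i => quadForm_lower (hP i)
    set a : ℝ := Finset.univ.inf' Finset.univ_nonempty aa with hadef
    have hapos : 0 < a := by
      rw [hadef, Finset.lt_inf'_iff]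
      exact fun i _ => (haa i).1
    set b : ℝ := Finset.univ.sup' Finset.univ_nonempty
      (fun i => ‖Matrix.toEuclideanCLM (𝕜 := ℝ) (P i)‖ + 1) with hbdef
    have hbpos : 0 < b := by
      obtain ⟨i⟩ := hN
      have : ‖Matrix.toEuclideanCLM (𝕜 := ℝ) (P i)‖ + 1 ≤ b := by
        rw [hbdef]
        exact Finset.le_sup' (fun j => ‖Matrix.toEuclideanCLM (𝕜 := ℝ) (P j)‖ + 1)
          (Finset.mem_univ i)
      have h0 : (0:ℝ) ≤ ‖Matrix.toEuclideanCLM (𝕜 := ℝ) (P i)‖ := norm_nonneg _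
      linarith
    refine ⟨a, b, hapos, hbpos, fun i z => ⟨?_, ?_⟩⟩
    · have h1 : a ≤ aa i := Finset.inf'_le _ (Finset.mem_univ i)
      exact le_trans (mul_le_mul_of_nonneg_right h1 (by positivity)) ((haa i).2 z)
    · have h1 : ‖Matrix.toEuclideanCLM (𝕜 := ℝ) (P i)‖ + 1 ≤ b := by
        rw [hbdef]
        exact Finset.le_sup' (fun j => ‖Matrix.toEuclideanCLM (𝕜 := ℝ) (P j)‖ + 1)
          (Finset.mem_univ i)
      have h2 := quadForm_le (P i) z
      nlinarith [norm_nonneg z]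

end Aux

/-- Average dwell time theorem: under a common exponential-decay rate `2λ₀` for the
Lyapunov-like functions, linear comparability with constant `μ ≥ 1`, and
`τ_a > ln μ / (2λ₀)`, there exists a single class-KL function `β` such that for every
switching signal with average dwell time `τ_a` and chatter bound `N₀`, every solution
satisfies `‖x(t)‖ ≤ β(‖x(0)‖, t)`; i.e., the switched system is globally uniformly
asymptotically stable over this class of switching signals. -/
theorem stmt14 {d N : ℕ}
    (A : Fin N → Matrix (Fin d) (Fin d) ℝ)
    (P : Fin N → Matrix (Fin d) (Fin d) ℝ)
    (lam0 : ℝ) (hlam0 : 0 < lam0)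
    (hP : ∀ i, (P i).PosDef)
    (hdecay : ∀ (i : Fin N) (ξ : EuclideanSpace ℝ (Fin d)) (t : ℝ), 0 ≤ t →
      quadForm (P i) (Matrix.toEuclideanLin (NormedSpace.exp (t • A i)) ξ) ≤
        Real.exp (-(2 * lam0) * t) * quadForm (P i) ξ)
    (μ : ℝ) (hμ1 : 1 ≤ μ)
    (hμ : ∀ i j : Fin N, ∀ z : EuclideanSpace ℝ (Fin d),
      quadForm (P j) z ≤ μ * quadForm (P i) z)
    (N0 τa : ℝ) (hN0 : 0 < N0) (hτa : Real.log μ / (2 * lam0) < τa) :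
    ∃ β : ℝ → ℝ → ℝ, IsClassKL β ∧
      ∀ (τ : ℕ → ℝ) (s : ℕ → Fin N),
        τ 0 = 0 → StrictMono τ → Tendsto τ atTop atTop → (∀ n, s (n + 1) ≠ s n) →
        -- average dwell time `τa` with chatter bound `N0`
        (∀ T t : ℝ, 0 ≤ t → t ≤ T →
          (Nat.card {n : ℕ | 1 ≤ n ∧ t < τ n ∧ τ n ≤ T} : ℝ) ≤ N0 + (T - t) / τa) →
        ∀ x : ℝ → EuclideanSpace ℝ (Fin d), IsSwitchedSolution A τ s x →
          ∀ t : ℝ, 0 ≤ t → ‖x t‖ ≤ β (‖x 0‖) t := by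
  classical
  have hμ0 : (0:ℝ) < μ := lt_of_lt_of_le one_pos hμ1
  have hlogμ : 0 ≤ Real.log μ := Real.log_nonneg hμ1
  have hτa0 : 0 < τa := lt_of_le_of_lt (div_nonneg hlogμ (by positivity)) hτa
  set lam : ℝ := lam0 - Real.log μ / (2 * τa) with hlamdef
  have hlam : 0 < lam := by
    have h1 : Real.log μ < τa * (2 * lam0) := (div_lt_iff₀ (by positivity)).1 hτa
    have h2 : Real.log μ / (2 * τa) < lam0 := (div_lt_iff₀ (by positivity)).2 (by nlinarith)
    rw [hlamdef]; linarith
  obtain ⟨a, b, ha0, hb0, hab⟩ := quadForm_bounds P hP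
  set C : ℝ := Real.sqrt (b / a * Real.exp (N0 * Real.log μ)) with hCdef
  have hC : 0 < C := Real.sqrt_pos.2 (by positivity)
  refine ⟨fun r t => C * Real.exp (-(lam * t)) * r, isClassKL_aux C lam hC hlam, ?_⟩
  intro τ s hτ0 hmono htop hneq hADT x hsol t ht
  have hτnn : ∀ n, 0 ≤ τ n := by
    intro n
    rcases Nat.eq_zero_or_pos n with rfl | h
    · exact le_of_eq hτ0.symm
    · have h2 := hmono (show 0 < n from h)
      rw [hτ0] at h2
      exact h2.le
  -- flow identity on each interval
  have key : ∀ n : ℕ, ∀ u ∈ Set.Icc (τ n) (τ (n + 1)),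
      x u = Matrix.toEuclideanLin (exp ((u - τ n) • A (s n))) (x (τ n)) := by
    intro n
    apply flow_eq
    · exact hsol.1.mono (fun v hv => le_trans (hτnn n) hv.1)
    · intro u hu
      have h := hsol.2 n u hu
      have hmem : Set.Ico (τ n) (τ (n + 1)) ∈ nhdsWithin u (Set.Ici u) := by
        refine mem_nhdsWithin.mpr ⟨Set.Iio (τ (n + 1)), isOpen_Iio, hu.2, ?_⟩
        rintro v ⟨hv1, hv2⟩
        exact ⟨le_trans hu.1 hv2, hv1⟩
      exact h.mono_of_mem_nhdsWithin hmem
  -- decay on each interval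
  have decay : ∀ n : ℕ, ∀ u ∈ Set.Icc (τ n) (τ (n + 1)),
      quadForm (P (s n)) (x u) ≤
        Real.exp (-(2 * lam0) * (u - τ n)) * quadForm (P (s n)) (x (τ n)) := by
    intro n u hu
    rw [key n u hu]
    exact hdecay (s n) (x (τ n)) (u - τ n) (sub_nonneg.2 hu.1)
  have hVx0 : 0 ≤ quadForm (P (s 0)) (x 0) :=
    le_trans (by positivity) ((hab (s 0) (x 0)).1)
  -- induction over switching times
  have step : ∀ n : ℕ, quadForm (P (s n)) (x (τ n)) ≤
      μ ^ n * Real.exp (-(2 * lam0) * τ n) * quadForm (P (s 0)) (x 0) := by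
    intro n
    induction n with
    | zero => rw [hτ0]; simp
    | succ n ih =>
      have hle : τ n ≤ τ (n + 1) := (hmono (Nat.lt_succ_self n)).le
      have hdec := decay n (τ (n + 1)) ⟨hle, le_rfl⟩
      have h1 : quadForm (P (s (n + 1))) (x (τ (n + 1))) ≤
          μ * quadForm (P (s n)) (x (τ (n + 1))) := hμ (s n) (s (n + 1)) _
      have hexpcomb : Real.exp (-(2 * lam0) * (τ (n + 1) - τ n)) *
          Real.exp (-(2 * lam0) * τ n) = Real.exp (-(2 * lam0) * τ (n + 1)) := by
        rw [← Real.exp_add]; congr 1; ring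
      calc quadForm (P (s (n + 1))) (x (τ (n + 1)))
          ≤ μ * (Real.exp (-(2 * lam0) * (τ (n + 1) - τ n)) *
              quadForm (P (s n)) (x (τ n))) :=
            le_trans h1 (mul_le_mul_of_nonneg_left hdec hμ0.le)
        _ ≤ μ * (Real.exp (-(2 * lam0) * (τ (n + 1) - τ n)) *
              (μ ^ n * Real.exp (-(2 * lam0) * τ n) * quadForm (P (s 0)) (x 0))) := by
            have h3 := mul_le_mul_of_nonneg_left ih
              (Real.exp_nonneg (-(2 * lam0) * (τ (n + 1) - τ n)))
            exact mul_le_mul_of_nonneg_left h3 hμ0.le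
        _ = μ ^ (n + 1) * Real.exp (-(2 * lam0) * τ (n + 1)) * quadForm (P (s 0)) (x 0) := by
            rw [← hexpcomb, pow_succ]; ring
  -- locate t in an interval
  obtain ⟨n, hn1, hn2⟩ : ∃ n : ℕ, τ n ≤ t ∧ t < τ (n + 1) := by
    have hex : ∃ m, t < τ m := (htop.eventually_gt_atTop t).exists
    have hm : t < τ (Nat.find hex) := Nat.find_spec hex
    have hm0 : Nat.find hex ≠ 0 := by
      intro h
      rw [h, hτ0] at hm
      exact absurd hm (not_lt.2 ht)
    obtain ⟨k, hk⟩ := Nat.exists_eq_succ_of_ne_zero hm0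
    refine ⟨k, ?_, ?_⟩
    · by_contra hcon
      exact Nat.find_min hex (by omega) (not_le.1 hcon)
    · have hkk : Nat.find hex = k + 1 := hk
      rw [← hkk]; exact hm
  -- bound at time t
  have hVt : quadForm (P (s n)) (x t) ≤
      μ ^ n * Real.exp (-(2 * lam0) * t) * quadForm (P (s 0)) (x 0) := by
    have h1 := decay n t ⟨hn1, hn2.le⟩
    have h2 := mul_le_mul_of_nonneg_left (step n)
      (Real.exp_nonneg (-(2 * lam0) * (t - τ n)))
    have hexpcomb : Real.exp (-(2 * lam0) * (t - τ n)) * Real.exp (-(2 * lam0) * τ n) =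
        Real.exp (-(2 * lam0) * t) := by rw [← Real.exp_add]; congr 1; ring
    calc quadForm (P (s n)) (x t)
        ≤ Real.exp (-(2 * lam0) * (t - τ n)) *
            (μ ^ n * Real.exp (-(2 * lam0) * τ n) * quadForm (P (s 0)) (x 0)) :=
          le_trans h1 h2
      _ = μ ^ n * Real.exp (-(2 * lam0) * t) * quadForm (P (s 0)) (x 0) := by
          rw [← hexpcomb]; ring
  -- counting switches
  have hcount : (n : ℝ) ≤ N0 + t / τa := by
    have hset : {k : ℕ | 1 ≤ k ∧ 0 < τ k ∧ τ k ≤ t} = Set.Icc 1 n := by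
      ext k
      simp only [Set.mem_setOf_eq, Set.mem_Icc]
      constructor
      · rintro ⟨h1, _, h3⟩
        exact ⟨h1, Nat.lt_succ_iff.1 (hmono.lt_iff_lt.1 (lt_of_le_of_lt h3 hn2))⟩
      · rintro ⟨h1, h2⟩
        refine ⟨h1, ?_, le_trans (hmono.monotone h2) hn1⟩
        have h := hmono (show 0 < k from h1)
        rwa [hτ0] at h
    have hc := hADT t 0 le_rfl ht
    rw [hset] at hc
    have hcard : Nat.card (Set.Icc 1 n : Set ℕ) = n := by
      rw [Nat.card_coe_set_eq, ← Finset.coe_Icc, Set.ncard_coe_finset, Nat.card_Icc]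
      omega
    rw [hcard] at hc
    simpa using hc
  have hμn : (μ : ℝ) ^ n ≤ Real.exp ((N0 + t / τa) * Real.log μ) := by
    have h1 : (μ : ℝ) ^ n = Real.exp ((n : ℝ) * Real.log μ) := by
      rw [Real.exp_nat_mul, Real.exp_log hμ0]
    rw [h1]
    exact Real.exp_le_exp.2 (mul_le_mul_of_nonneg_right hcount hlogμ)
  -- the main chain
  have hchain : a * ‖x t‖ ^ 2 ≤
      Real.exp (N0 * Real.log μ) * Real.exp (-(2 * lam) * t) * (b * ‖x 0‖ ^ 2) := by
    have c1 : a * ‖x t‖ ^ 2 ≤ quadForm (P (s n)) (x t) := (hab (s n) (x t)).1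
    have c3 : quadForm (P (s 0)) (x 0) ≤ b * ‖x 0‖ ^ 2 := (hab (s 0) (x 0)).2
    have c5 : quadForm (P (s n)) (x t) ≤
        Real.exp ((N0 + t / τa) * Real.log μ) * Real.exp (-(2 * lam0) * t) *
          (b * ‖x 0‖ ^ 2) := by
      calc quadForm (P (s n)) (x t)
          ≤ μ ^ n * Real.exp (-(2 * lam0) * t) * quadForm (P (s 0)) (x 0) := hVt
        _ ≤ Real.exp ((N0 + t / τa) * Real.log μ) * Real.exp (-(2 * lam0) * t) *
            (b * ‖x 0‖ ^ 2) := by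
          have hstep1 : μ ^ n * Real.exp (-(2 * lam0) * t) * quadForm (P (s 0)) (x 0) ≤
              Real.exp ((N0 + t / τa) * Real.log μ) * Real.exp (-(2 * lam0) * t) *
                quadForm (P (s 0)) (x 0) := by
            apply mul_le_mul_of_nonneg_right _ hVx0
            exact mul_le_mul_of_nonneg_right hμn (Real.exp_nonneg _)
          have hstep2 : Real.exp ((N0 + t / τa) * Real.log μ) * Real.exp (-(2 * lam0) * t) *
              quadForm (P (s 0)) (x 0) ≤
              Real.exp ((N0 + t / τa) * Real.log μ) * Real.exp (-(2 * lam0) * t) *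
                (b * ‖x 0‖ ^ 2) := by
            apply mul_le_mul_of_nonneg_left c3
            positivity
          exact le_trans hstep1 hstep2
    have hexp2 : Real.exp ((N0 + t / τa) * Real.log μ) * Real.exp (-(2 * lam0) * t) =
        Real.exp (N0 * Real.log μ) * Real.exp (-(2 * lam) * t) := by
      rw [← Real.exp_add, ← Real.exp_add]
      congr 1
      rw [hlamdef]
      field_simp
      ring
    calc a * ‖x t‖ ^ 2 ≤ _ := le_trans c1 c5
      _ = Real.exp (N0 * Real.log μ) * Real.exp (-(2 * lam) * t) * (b * ‖x 0‖ ^ 2) := by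
        rw [hexp2]
  -- conclude
  have hRnn : 0 ≤ C * Real.exp (-(lam * t)) * ‖x 0‖ := by positivity
  have hsq : ‖x t‖ ^ 2 ≤ (C * Real.exp (-(lam * t)) * ‖x 0‖) ^ 2 := by
    have hCsq : C ^ 2 = b / a * Real.exp (N0 * Real.log μ) := by
      rw [hCdef]; exact Real.sq_sqrt (by positivity)
    have hesq : Real.exp (-(lam * t)) ^ 2 = Real.exp (-(2 * lam) * t) := by
      rw [sq, ← Real.exp_add]; congr 1; ring
    have hR : a * (C * Real.exp (-(lam * t)) * ‖x 0‖) ^ 2 =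
        Real.exp (N0 * Real.log μ) * Real.exp (-(2 * lam) * t) * (b * ‖x 0‖ ^ 2) := by
      rw [mul_pow, mul_pow, hCsq, hesq]
      field_simp
    have h := hchain
    rw [← hR] at h
    exact le_of_mul_le_mul_left h ha0
  calc ‖x t‖ = Real.sqrt (‖x t‖ ^ 2) := (Real.sqrt_sq (norm_nonneg _)).symm
    _ ≤ Real.sqrt ((C * Real.exp (-(lam * t)) * ‖x 0‖) ^ 2) := Real.sqrt_le_sqrt hsq
    _ = C * Real.exp (-(lam * t)) * ‖x 0‖ := Real.sqrt_sq hRnn
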